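/- Let G be a graph on n ≥ 3 vertices that contains a leaf x with unique neighbor v, and suppose that both G−x and G−{x,v} are path-extremal. Then G is path-extremal. -/

import Mathlib

open SimpleGraph

/-- The zero forcing closure: `ZFClosure G S v` means vertex `v` eventually becomes blue
when starting from the blue set `S` and repeatedly applying the color-change rule:
a blue vertex with exactly one white neighbor forces that neighbor to become blue. -/
inductive ZFClosure {V : Type*} (G : SimpleGraph V) (S : Set V) : V → Prop
  | init {v : V} : v ∈ S → ZFClosure G S v
  | force {u w : V} : ZFClosure G S u → G.Adj u w →
      (∀ x, G.Adj u x → x ≠ w → ZFClosure G S x) → ZFClosure G S w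

/-- `S` is a zero forcing set of `G` if its closure is all of `V`. -/
def IsZeroForcing {V : Type*} (G : SimpleGraph V) (S : Set V) : Prop :=
  ∀ v, ZFClosure G S v

/-- `z(G;k)`: the number of zero forcing sets of size `k`. -/
noncomputable def zfCount {V : Type*} (G : SimpleGraph V) [Fintype V] (k : ℕ) : ℕ :=
  Nat.card {S : Finset V // S.card = k ∧ IsZeroForcing G ↑S}

/-- `z'(G;k)`: the number of non-forcing `k`-subsets. -/
noncomputable def nfCount {V : Type*} (G : SimpleGraph V) [Fintype V] (k : ℕ) : ℕ :=
  Nat.card {S : Finset V // S.card = k ∧ ¬ IsZeroForcing G ↑S}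

/-- A fort: every vertex outside `F` has `0` or at least `2` neighbors in `F`. -/
def IsFort {V : Type*} (G : SimpleGraph V) (F : Set V) : Prop :=
  ∀ v ∉ F, (∀ w ∈ F, ¬ G.Adj v w) ∨
    ∃ w₁ ∈ F, ∃ w₂ ∈ F, w₁ ≠ w₂ ∧ G.Adj v w₁ ∧ G.Adj v w₂

/-- True twins: adjacent with the same neighbors outside the pair. -/
def TrueTwins {V : Type*} (G : SimpleGraph V) (u v : V) : Prop :=
  G.Adj u v ∧ ∀ w, w ≠ u → w ≠ v → (G.Adj u w ↔ G.Adj v w)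

/-- False twins: distinct, nonadjacent, with the same open neighborhoods. -/
def FalseTwins {V : Type*} (G : SimpleGraph V) (u v : V) : Prop :=
  u ≠ v ∧ ¬ G.Adj u v ∧ ∀ w, G.Adj u w ↔ G.Adj v w

/-- A twin pair: true twins or false twins. -/
def TwinPair {V : Type*} (G : SimpleGraph V) (u v : V) : Prop :=
  TrueTwins G u v ∨ FalseTwins G u v

/-- `G` is path-extremal: the path on the same number of vertices has
coefficientwise at least as many zero forcing sets of every size. -/
noncomputable def PathExtremal {V : Type*} (G : SimpleGraph V) [Fintype V] : Prop :=
  ∀ k : ℕ, zfCount G k ≤ zfCount (SimpleGraph.pathGraph (Fintype.card V)) k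

/-- If `G` (on `n ≥ 3` vertices) has a leaf `x` with unique neighbor `v`, and both
`G - x` and `G - {x,v}` are path-extremal, then `G` is path-extremal. -/

lemma zfClosure_empty {W : Type*} (H : SimpleGraph W) : ∀ w, ¬ ZFClosure H ∅ w := by
  intro w hw
  induction hw with
  | init h => exact h
  | force hu hadj hnb ihu ihnb => exact ihu

lemma nat_split_zf {α : Type*} [Finite α] (p q : α → Prop) :
    Nat.card {a // p a ∧ q a} + Nat.card {a // p a ∧ ¬ q a} = Nat.card {a // p a} := by
  classical
  rw [← Nat.card_congr (Equiv.subtypeSubtypeEquivSubtypeInter p q),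
      ← Nat.card_congr (Equiv.subtypeSubtypeEquivSubtypeInter p (fun a => ¬ q a)),
      ← Nat.card_sum, Nat.card_congr (Equiv.sumCompl _)]

lemma zf_add_nf {W : Type*} [Fintype W] (H : SimpleGraph W) (k : ℕ) :
    zfCount H k + nfCount H k = (Fintype.card W).choose k := by
  classical
  rw [zfCount, nfCount, nat_split_zf, Nat.card_eq_fintype_card, Fintype.card_finset_len]

/-- `Good S`: S avoids the endpoints of the path and contains no two consecutive vertices. -/
def PGood {m : ℕ} (S : Finset (Fin m)) : Prop :=
  (∀ i ∈ S, i.val ≠ 0 ∧ i.val + 1 ≠ m) ∧ ∀ i ∈ S, ∀ j ∈ S, i.val + 1 ≠ j.val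

lemma path_up {m : ℕ} {S : Set (Fin m)} {i : ℕ} (hi1 : i + 1 < m)
    (h0 : ZFClosure (pathGraph m) S ⟨i, by omega⟩)
    (h1 : ZFClosure (pathGraph m) S ⟨i + 1, hi1⟩) :
    ∀ j, i ≤ j → ∀ (hj : j < m), ZFClosure (pathGraph m) S ⟨j, hj⟩ := by
  intro j
  induction j using Nat.strong_induction_on with
  | _ j ih =>
    intro hij hj
    rcases Nat.lt_or_ge j (i + 2) with hlt | hge
    · rcases Nat.eq_or_lt_of_le hij with rfl | hlt2
      · exact h0
      · have : j = i + 1 := by omega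
        subst this; exact h1
    · have hprev : ZFClosure (pathGraph m) S ⟨j - 1, by omega⟩ :=
        ih (j - 1) (by omega) (by omega) (by omega)
      refine ZFClosure.force hprev (pathGraph_adj.2 (Or.inl (show j - 1 + 1 = j by omega))) ?_
      intro y hy hne
      have hy' : j - 1 + 1 = y.val ∨ y.val + 1 = j - 1 := pathGraph_adj.1 hy
      have hne' : y.val ≠ j := fun h => hne (Fin.ext h)
      have hval : y = ⟨j - 2, by omega⟩ := Fin.ext (show y.val = j - 2 by omega)
      rw [hval]
      exact ih (j - 2) (by omega) (by omega) (by omega)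

lemma path_down {m : ℕ} {S : Set (Fin m)} {i : ℕ} (hi1 : i + 1 < m)
    (h0 : ZFClosure (pathGraph m) S ⟨i, by omega⟩)
    (h1 : ZFClosure (pathGraph m) S ⟨i + 1, hi1⟩) :
    ∀ j, j ≤ i → ∀ (hj : j < m), ZFClosure (pathGraph m) S ⟨j, hj⟩ := by
  have aux : ∀ d, d ≤ i → ZFClosure (pathGraph m) S ⟨i - d, by omega⟩ := by
    intro d
    induction d using Nat.strong_induction_on with
    | _ d ih =>
      intro hd
      rcases Nat.eq_zero_or_pos d with rfl | hdpos
      · exact h0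
      · have hprev : ZFClosure (pathGraph m) S ⟨i - (d - 1), by omega⟩ :=
          ih (d - 1) (by omega) (by omega)
        refine ZFClosure.force hprev
          (pathGraph_adj.2 (Or.inr (show (i - d) + 1 = i - (d - 1) by omega))) ?_
        intro y hy hne
        have hy' : i - (d - 1) + 1 = y.val ∨ y.val + 1 = i - (d - 1) := pathGraph_adj.1 hy
        have hne' : y.val ≠ i - d := fun h => hne (Fin.ext h)
        have hyv : y.val = i - d + 2 := by omega
        rcases Nat.lt_or_ge d 2 with hd2 | hd2
        · have hd1 : d = 1 := by omega
          subst hd1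
          have hval : y = ⟨i + 1, hi1⟩ := Fin.ext (show y.val = i + 1 by omega)
          rw [hval]; exact h1
        · have hval : y = ⟨i - (d - 2), by omega⟩ := Fin.ext (show y.val = i - (d - 2) by omega)
          rw [hval]
          exact ih (d - 2) (by omega) (by omega)
  intro j hij hj
  have h := aux (i - j) (by omega)
  have heq : (⟨i - (i - j), by omega⟩ : Fin m) = ⟨j, hj⟩ := Fin.ext (show i - (i - j) = j by omega)
  rwa [heq] at h

lemma path_endpoint0 {m : ℕ} {S : Set (Fin m)} (hm : 0 < m)
    (h0 : ZFClosure (pathGraph m) S ⟨0, hm⟩) : IsZeroForcing (pathGraph m) S := by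
  rcases Nat.lt_or_ge 1 m with h2 | h2
  · have h1 : ZFClosure (pathGraph m) S ⟨1, h2⟩ := by
      refine ZFClosure.force h0 (pathGraph_adj.2 (Or.inl (show 0 + 1 = 1 by omega))) ?_
      intro y hy hne
      have hy' : 0 + 1 = y.val ∨ y.val + 1 = 0 := pathGraph_adj.1 hy
      exact absurd (Fin.ext (show y.val = 1 by omega)) hne
    intro w
    exact path_up h2 h0 h1 w.val (Nat.zero_le _) w.isLt
  · intro w
    have : w = ⟨0, hm⟩ := Fin.ext (by omega)
    rw [this]; exact h0

lemma path_endpointLast {m : ℕ} {S : Set (Fin m)} (hm : 0 < m)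
    (hL : ZFClosure (pathGraph m) S ⟨m - 1, by omega⟩) : IsZeroForcing (pathGraph m) S := by
  rcases Nat.lt_or_ge 1 m with h2 | h2
  · have h1 : ZFClosure (pathGraph m) S ⟨m - 2, by omega⟩ := by
      refine ZFClosure.force hL (pathGraph_adj.2 (Or.inr (show m - 2 + 1 = m - 1 by omega))) ?_
      intro y hy hne
      have hy' : m - 1 + 1 = y.val ∨ y.val + 1 = m - 1 := pathGraph_adj.1 hy
      have : y.val < m := y.isLt
      exact absurd (Fin.ext (show y.val = m - 2 by omega)) hne
    have hL' : ZFClosure (pathGraph m) S ⟨m - 2 + 1, by omega⟩ := by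
      have : (⟨m - 2 + 1, by omega⟩ : Fin m) = ⟨m - 1, by omega⟩ :=
        Fin.ext (show m - 2 + 1 = m - 1 by omega)
      rw [this]; exact hL
    intro w
    rcases eq_or_lt_of_le (Nat.le_of_lt_succ (show w.val < (m - 1) + 1 by have := w.isLt; omega))
      with hw | hw
    · have : w = ⟨m - 1, by omega⟩ := Fin.ext hw
      rw [this]; exact hL
    · have hww : w.val ≤ m - 2 := by omega
      exact Fin.eta w w.isLt ▸
        path_down (i := m - 2) (show m - 2 + 1 < m by omega) h1 hL' w.val hww w.isLt
  · intro w
    have : w = ⟨m - 1, by omega⟩ := Fin.ext (by omega)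
    rw [this]; exact hL

lemma path_stuck {m : ℕ} {S : Finset (Fin m)} (hgood : PGood S) :
    ∀ w, ZFClosure (pathGraph m) ↑S w → w ∈ S := by
  intro w hw
  induction hw with
  | init h => exact h
  | @force u w hu hadj hnb ihu ihnb =>
    exfalso
    have huS : u ∈ S := ihu
    have h1 := hgood.1 u huS
    have hadj' : u.val + 1 = w.val ∨ w.val + 1 = u.val := pathGraph_adj.1 hadj
    have hu1 : u.val ≠ 0 := h1.1
    have hum : u.val + 1 ≠ m := h1.2
    have hum' : u.val < m := u.isLt
    rcases hadj' with h | h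
    · -- w = u + 1, other neighbor u - 1
      have hyS : (⟨u.val - 1, by omega⟩ : Fin m) ∈ S := by
        refine ihnb _ (pathGraph_adj.2 (Or.inr (show u.val - 1 + 1 = u.val by omega))) ?_
        intro he
        have : u.val - 1 = w.val := congrArg Fin.val he
        omega
      exact hgood.2 _ hyS u huS (show u.val - 1 + 1 = u.val by omega)
    · -- w = u - 1, other neighbor u + 1
      have hyS : (⟨u.val + 1, by omega⟩ : Fin m) ∈ S := by
        refine ihnb _ (pathGraph_adj.2 (Or.inl (show u.val + 1 = u.val + 1 by rfl))) ?_
        intro he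
        have : u.val + 1 = w.val := congrArg Fin.val he
        omega
      exact hgood.2 u huS _ hyS (show u.val + 1 = u.val + 1 by rfl)

lemma path_nonforcing {m : ℕ} (hm : 0 < m) (S : Finset (Fin m)) (hgood : PGood S) :
    ¬ IsZeroForcing (pathGraph m) ↑S := fun h =>
  (hgood.1 _ (path_stuck hgood ⟨0, hm⟩ (h _))).1 rfl

lemma path_forcing {m : ℕ} (S : Finset (Fin m)) (h : ¬ PGood S) :
    IsZeroForcing (pathGraph m) ↑S := by
  rw [PGood] at h
  by_cases hA : ∀ i ∈ S, i.val ≠ 0 ∧ i.val + 1 ≠ m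
  · have hB : ¬ ∀ i ∈ S, ∀ j ∈ S, i.val + 1 ≠ j.val := fun hB => h ⟨hA, hB⟩
    push_neg at hB
    obtain ⟨i, hiS, j, hjS, hij⟩ := hB
    have hi1 : i.val + 1 < m := by have := j.isLt; omega
    have h0 : ZFClosure (pathGraph m) (↑S) ⟨i.val, by omega⟩ := by
      have : (⟨i.val, by omega⟩ : Fin m) = i := Fin.ext rfl
      rw [this]; exact ZFClosure.init (Finset.mem_coe.2 hiS)
    have h1 : ZFClosure (pathGraph m) (↑S) ⟨i.val + 1, hi1⟩ := by
      have : (⟨i.val + 1, hi1⟩ : Fin m) = j := Fin.ext hij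
      rw [this]; exact ZFClosure.init (Finset.mem_coe.2 hjS)
    intro w
    rcases le_or_gt w.val i.val with hw | hw
    · exact Fin.eta w w.isLt ▸ path_down hi1 h0 h1 w.val hw w.isLt
    · exact Fin.eta w w.isLt ▸ path_up hi1 h0 h1 w.val (by omega) w.isLt
  · push_neg at hA
    obtain ⟨i, hiS, hi⟩ := hA
    have hm : 0 < m := i.pos  -- i : Fin m nonempty
    by_cases h0 : i.val = 0
    · refine path_endpoint0 hm ?_
      have : (⟨0, hm⟩ : Fin m) = i := Fin.ext h0.symm
      rw [this]; exact ZFClosure.init (Finset.mem_coe.2 hiS)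
    · have hlast : i.val + 1 = m := hi h0
      refine path_endpointLast hm ?_
      have : (⟨m - 1, by omega⟩ : Fin m) = i := Fin.ext (show m - 1 = i.val by omega)
      rw [this]; exact ZFClosure.init (Finset.mem_coe.2 hiS)

lemma preimage_castLE_spec {a m : ℕ} (h : a ≤ m) (S : Finset (Fin m)) (hS : ∀ i ∈ S, i.val < a) :
    (S.preimage (Fin.castLE h) (Fin.castLE_injective h).injOn).image (Fin.castLE h) = S ∧
    (S.preimage (Fin.castLE h) (Fin.castLE_injective h).injOn).card = S.card := by
  classical
  have himg : (S.preimage (Fin.castLE h) (Fin.castLE_injective h).injOn).image (Fin.castLE h) = S := by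
    rw [Finset.image_preimage]
    refine Finset.filter_true_of_mem ?_
    intro i hi
    exact ⟨⟨i.val, hS i hi⟩, Fin.ext rfl⟩
  refine ⟨himg, ?_⟩
  calc (S.preimage (Fin.castLE h) (Fin.castLE_injective h).injOn).card
      = ((S.preimage (Fin.castLE h) (Fin.castLE_injective h).injOn).image (Fin.castLE h)).card :=
        (Finset.card_image_of_injective _ (Fin.castLE_injective h)).symm
    _ = S.card := by rw [himg]

lemma path_rec {m : ℕ} (hm : 3 ≤ m) (k : ℕ) :
    nfCount (pathGraph m) k ≤ nfCount (pathGraph (m - 1)) k + nfCount (pathGraph (m - 2)) (k - 1) := by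
  classical
  have hcast1 : m - 1 ≤ m := by omega
  have hcast2 : m - 2 ≤ m := by omega
  set e : Fin m := ⟨m - 2, by omega⟩ with he
  have hgood : ∀ S : Finset (Fin m), ¬ IsZeroForcing (pathGraph m) ↑S → PGood S :=
    fun S h => by_contra fun hg => h (path_forcing S hg)
  -- bounds
  have hbound2 : ∀ S : Finset (Fin m), PGood S → e ∈ S →
      ∀ i ∈ S.erase e, i.val ≠ 0 ∧ i.val + 3 ≤ m ∧ i.val + 1 ≠ m - 2 := by
    intro S hg hmem i hi
    obtain ⟨hne, hiS⟩ := Finset.mem_erase.1 hi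
    have h1 := hg.1 i hiS
    have h2 : i.val + 1 ≠ m - 2 := hg.2 i hiS e hmem
    have h3 : i.val ≠ m - 2 := fun hv => hne (Fin.ext hv)
    have := i.isLt
    exact ⟨h1.1, by omega, h2⟩
  have hbound1 : ∀ S : Finset (Fin m), PGood S → e ∉ S → ∀ i ∈ S, i.val < m - 1 := by
    intro S hg hmem i hiS
    have h1 := hg.1 i hiS
    have h3 : i.val ≠ m - 2 := fun hv => hmem (by
      have hei : e = i := Fin.ext hv.symm
      rwa [hei])
    have := i.isLt
    omega
  rw [nfCount, nfCount, nfCount, ← Nat.card_sum]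
  let F : {S : Finset (Fin m) // S.card = k ∧ ¬IsZeroForcing (pathGraph m) ↑S} →
      {S : Finset (Fin (m - 1)) // S.card = k ∧ ¬IsZeroForcing (pathGraph (m - 1)) ↑S} ⊕
      {S : Finset (Fin (m - 2)) // S.card = k - 1 ∧ ¬IsZeroForcing (pathGraph (m - 2)) ↑S} :=
    fun a =>
      if hmem : e ∈ a.1 then
        Sum.inr ⟨(a.1.erase e).preimage (Fin.castLE hcast2) (Fin.castLE_injective hcast2).injOn, by
          have hg := hgood a.1 a.2.2
          have hb := hbound2 a.1 hg hmem
          have hb' : ∀ i ∈ a.1.erase e, i.val < m - 2 := fun i hi => by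
            have := (hb i hi).2.1; omega
          constructor
          · rw [(preimage_castLE_spec hcast2 _ hb').2, Finset.card_erase_of_mem hmem, a.2.1]
          · refine path_nonforcing (by omega) _ ?_
            constructor
            · intro j hj
              have hj' := Finset.mem_preimage.1 hj
              obtain ⟨hb1, hb2, hb3⟩ := hb _ hj'
              have hv : (Fin.castLE hcast2 j).val = j.val := rfl
              rw [hv] at hb1 hb2 hb3
              exact ⟨hb1, hb3⟩
            · intro j1 h1 j2 h2
              have h1' := Finset.mem_preimage.1 h1
              have h2' := Finset.mem_preimage.1 h2
              exact hg.2 _ (Finset.mem_of_mem_erase h1') _ (Finset.mem_of_mem_erase h2')⟩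
      else
        Sum.inl ⟨a.1.preimage (Fin.castLE hcast1) (Fin.castLE_injective hcast1).injOn, by
          have hg := hgood a.1 a.2.2
          have hb := hbound1 a.1 hg hmem
          constructor
          · rw [(preimage_castLE_spec hcast1 _ hb).2, a.2.1]
          · refine path_nonforcing (by omega) _ ?_
            constructor
            · intro j hj
              have hj' := Finset.mem_preimage.1 hj
              have h1 := hg.1 _ hj'
              have h2 := hb _ hj'
              have h3 : j.val ≠ m - 2 := fun hv => hmem (by
                have : Fin.castLE hcast1 j = e := Fin.ext (by simpa using hv)
                rwa [this] at hj')
              have := j.isLt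
              constructor
              · exact h1.1
              · omega
            · intro j1 h1 j2 h2
              exact hg.2 _ (Finset.mem_preimage.1 h1) _ (Finset.mem_preimage.1 h2)⟩
  have hinj : Function.Injective F := by
    intro a b hab
    by_cases ha : e ∈ a.1 <;> by_cases hb : e ∈ b.1 <;>
      simp only [F, dif_pos, dif_neg, ha, hb, dite_true, dite_false, Sum.inr.injEq,
        Sum.inl.injEq, Subtype.mk.injEq, reduceDIte] at hab
    · -- both contain e
      have hva : ∀ i ∈ a.1.erase e, i.val < m - 2 := fun i hi => by
        have := (hbound2 a.1 (hgood a.1 a.2.2) ha i hi).2.1; omega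
      have hvb : ∀ i ∈ b.1.erase e, i.val < m - 2 := fun i hi => by
        have := (hbound2 b.1 (hgood b.1 b.2.2) hb i hi).2.1; omega
      have := congrArg (Finset.image (Fin.castLE hcast2)) hab
      rw [(preimage_castLE_spec hcast2 _ hva).1, (preimage_castLE_spec hcast2 _ hvb).1] at this
      have : a.1 = b.1 := by
        rw [← Finset.insert_erase ha, ← Finset.insert_erase hb, this]
      exact Subtype.ext this
    · exact absurd hab (by simp)
    · exact absurd hab (by simp)
    · have := congrArg (Finset.image (Fin.castLE hcast1)) hab
      rw [(preimage_castLE_spec hcast1 _ (hbound1 a.1 (hgood a.1 a.2.2) ha)).1,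
          (preimage_castLE_spec hcast1 _ (hbound1 b.1 (hgood b.1 b.2.2) hb)).1] at this
      exact Subtype.ext this
  exact Nat.card_le_card_of_injective F hinj

section sims
variable {V : Type*} {G : SimpleGraph V} {x v : V}

/-- Simulation: forcing in `G` from a blue set avoiding `x` restricts to `G - x`. -/
lemma simA (hadj : G.Adj x v) (huniq : ∀ w, G.Adj x w → w = v)
    {s : Set V} (hs : ∀ w, w ∈ s ↔ w ≠ x)
    (S' : Set s) {w : V} (hw : ZFClosure G (Subtype.val '' S') w) :
    (∀ h : w ∈ s, ZFClosure (G.induce s) S' ⟨w, h⟩) ∧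
    (w = x → ∀ h : v ∈ s, ZFClosure (G.induce s) S' ⟨v, h⟩ ∧
      ∀ y (h2 : y ∈ s), G.Adj v y → ZFClosure (G.induce s) S' ⟨y, h2⟩) := by
  induction hw with
  | @init w hwS =>
    obtain ⟨w', hw', rfl⟩ := hwS
    refine ⟨fun h => ?_, fun hx => absurd hx ((hs _).1 w'.2)⟩
    · have : (⟨(w' : V), h⟩ : s) = w' := Subtype.ext rfl
      rw [this]; exact ZFClosure.init hw'
  | @force u w hu huw hnb ihu ihnb =>
    constructor
    · intro h
      have hwx : w ≠ x := (hs w).1 h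
      by_cases hux : u = x
      · subst hux
        have hwv : w = v := huniq w huw
        subst hwv
        exact (ihu.2 rfl h).1
      · have hu' : u ∈ s := (hs u).2 hux
        refine ZFClosure.force (ihu.1 hu') (by exact huw) ?_
        intro y' hy' hne
        have : (y' : V) ≠ w := fun hh => hne (Subtype.ext hh)
        have := (ihnb (y' : V) (by exact hy') this).1 y'.2
        simpa using this
    · intro hwx h
      have hux : u = v := huniq u (G.adj_symm (by rw [← hwx]; exact huw))
      have hus : u ∈ s := by rw [hux]; exact h
      have hv0 := ihu.1 hus
      have heq : (⟨u, hus⟩ : s) = ⟨v, h⟩ := Subtype.ext hux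
      rw [heq] at hv0
      refine ⟨hv0, ?_⟩
      intro y h2 hy
      have hyx : y ≠ x := (hs y).1 h2
      exact (ihnb y (by rw [hux]; exact hy) (fun hh => hyx (hh.trans hwx))).1 h2

/-- Simulation for `G - {x,v}` with blue set `T ∪ {v}`. -/
lemma simB (hadj : G.Adj x v) (huniq : ∀ w, G.Adj x w → w = v)
    {s : Set V} (hs : ∀ w, w ∈ s ↔ (w ≠ x ∧ w ≠ v))
    (T' : Set s) {w : V} (hw : ZFClosure G (insert v (Subtype.val '' T')) w) :
    (∀ h : w ∈ s, ZFClosure (G.induce s) T' ⟨w, h⟩) ∧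
    (w = x → ∀ y (h2 : y ∈ s), G.Adj v y → ZFClosure (G.induce s) T' ⟨y, h2⟩) := by
  induction hw with
  | @init w hwS =>
    rcases hwS with rfl | hwS
    · exact ⟨fun h => absurd rfl ((hs _).1 h).2, fun hx => absurd hx hadj.ne'⟩
    · obtain ⟨w', hw', rfl⟩ := hwS
      refine ⟨fun h => ?_, fun hx => absurd hx ((hs _).1 w'.2).1⟩
      have : (⟨(w' : V), h⟩ : s) = w' := Subtype.ext rfl
      rw [this]; exact ZFClosure.init hw'
  | @force u w hu huw hnb ihu ihnb =>
    constructor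
    · intro h
      obtain ⟨hwx, hwv⟩ := (hs w).1 h
      by_cases hux : u = x
      · subst hux; exact absurd (huniq w huw) hwv
      · by_cases huv : u = v
        · subst huv
          have hxw : x ≠ w := fun hh => hwx hh.symm
          exact (ihnb x (G.adj_symm hadj) hxw).2 rfl w h huw
        · have hu' : u ∈ s := (hs u).2 ⟨hux, huv⟩
          refine ZFClosure.force (ihu.1 hu') (by exact huw) ?_
          intro y' hy' hne
          have : (y' : V) ≠ w := fun hh => hne (Subtype.ext hh)
          have := (ihnb (y' : V) (by exact hy') this).1 y'.2
          simpa using this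
    · intro hwx y h2 hy
      have hux : u = v := huniq u (G.adj_symm (by rw [← hwx]; exact huw))
      have hyx : y ≠ x := ((hs y).1 h2).1
      exact (ihnb y (by rw [hux]; exact hy) (fun hh => hyx (hh.trans hwx))).1 h2

/-- Simulation: if `T ∪ {x}` forces `G`, then `T ∪ {v}` forces `G - x`. -/
lemma simC (hadj : G.Adj x v) (huniq : ∀ w, G.Adj x w → w = v)
    {s : Set V} (hs : ∀ w, w ∈ s ↔ w ≠ x)
    (U : Set V) {w : V} (hw : ZFClosure G (insert x U) w) :
    ∀ h : w ∈ s, ZFClosure (G.induce s) (Subtype.val ⁻¹' (insert v U)) ⟨w, h⟩ := by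
  induction hw with
  | @init w hwS =>
    intro h
    rcases hwS with rfl | hwS
    · exact absurd rfl ((hs _).1 h)
    · exact ZFClosure.init (Set.mem_insert_iff.2 (Or.inr hwS))
  | @force u w hu huw hnb ihu ihnb =>
    intro h
    by_cases hux : u = x
    · subst hux
      have hwv : w = v := huniq w huw
      subst hwv
      exact ZFClosure.init (Set.mem_insert_iff.2 (Or.inl rfl))
    · have hu' : u ∈ s := (hs u).2 hux
      refine ZFClosure.force (ihu hu') (by exact huw) ?_
      intro y' hy' hne
      have : (y' : V) ≠ w := fun hh => hne (Subtype.ext hh)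
      have := ihnb (y' : V) (by exact hy') this y'.2
      simpa using this
end sims


section wrappers
variable {V : Type*} [DecidableEq V] {G : SimpleGraph V} {x v : V}

lemma nfA (hadj : G.Adj x v) (huniq : ∀ w, G.Adj x w → w = v)
    {s : Set V} (hs : ∀ w, w ∈ s ↔ w ≠ x) (S' : Finset s)
    (hnf : ¬ IsZeroForcing (G.induce s) ↑S') :
    ¬ IsZeroForcing G ↑(S'.map (Function.Embedding.subtype _)) := by
  intro hf
  apply hnf
  intro z
  have hset : (↑(S'.map (Function.Embedding.subtype (· ∈ s))) : Set V)
      = Subtype.val '' (↑S' : Set s) := by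
    rw [Finset.coe_map]; rfl
  rw [hset] at hf
  have := (simA hadj huniq hs _ (hf ↑z)).1 z.2
  simpa using this

lemma nfB (hadj : G.Adj x v) (huniq : ∀ w, G.Adj x w → w = v)
    {s : Set V} (hs : ∀ w, w ∈ s ↔ (w ≠ x ∧ w ≠ v)) (T' : Finset s)
    (hnf : ¬ IsZeroForcing (G.induce s) ↑T') :
    ¬ IsZeroForcing G ↑(insert v (T'.map (Function.Embedding.subtype _))) := by
  intro hf
  apply hnf
  intro z
  have hset : (↑(insert v (T'.map (Function.Embedding.subtype (· ∈ s)))) : Set V)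
      = insert v (Subtype.val '' (↑T' : Set s)) := by
    rw [Finset.coe_insert, Finset.coe_map]; rfl
  rw [hset] at hf
  have := (simB hadj huniq hs _ (hf ↑z)).1 z.2
  simpa using this

lemma zfC (hadj : G.Adj x v) (huniq : ∀ w, G.Adj x w → w = v)
    {s : Set V} (hs : ∀ w, w ∈ s ↔ w ≠ x) (U : Set V) (hxU : x ∉ U)
    (hf : IsZeroForcing G (insert x U)) :
    IsZeroForcing (G.induce s) (Subtype.val ⁻¹' (insert v U)) := by
  intro z
  have := simC hadj huniq hs U (hf ↑z) z.2
  simpa using this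

end wrappers

theorem stmt_17 {V : Type*} [Fintype V] [DecidableEq V] (G : SimpleGraph V)
    (hn : 3 ≤ Fintype.card V) (x v : V)
    (hadj : G.Adj x v) (huniq : ∀ w, G.Adj x w → w = v)
    (h1 : PathExtremal (G.induce ((Finset.univ.erase x : Finset V) : Set V)))
    (h2 : PathExtremal (G.induce (((Finset.univ.erase x).erase v : Finset V) : Set V))) :
    PathExtremal G := by
  classical
  have hxv : x ≠ v := hadj.ne
  set n := Fintype.card V with hndef
  set s₁ : Set V := ((Finset.univ.erase x : Finset V) : Set V) with hs₁def
  set s₂ : Set V := (((Finset.univ.erase x).erase v : Finset V) : Set V) with hs₂def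
  have hs₁ : ∀ w, w ∈ s₁ ↔ w ≠ x := by
    intro w; rw [hs₁def]; simp
  have hs₂ : ∀ w, w ∈ s₂ ↔ (w ≠ x ∧ w ≠ v) := by
    intro w; rw [hs₂def]; simp [and_comm]
  have hc1 : Fintype.card s₁ = n - 1 := by
    have e : ↥s₁ ≃ {a // a ∈ Finset.univ.erase x} := Equiv.subtypeEquivRight fun a => Iff.rfl
    rw [Fintype.card_congr e, Fintype.card_coe,
      Finset.card_erase_of_mem (Finset.mem_univ x), Finset.card_univ]
  have hc2 : Fintype.card s₂ = n - 2 := by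
    have e : ↥s₂ ≃ {a // a ∈ (Finset.univ.erase x).erase v} :=
      Equiv.subtypeEquivRight fun a => Iff.rfl
    rw [Fintype.card_congr e, Fintype.card_coe,
      Finset.card_erase_of_mem
        (Finset.mem_erase.2 ⟨fun h => hxv h.symm, Finset.mem_univ v⟩),
      Finset.card_erase_of_mem (Finset.mem_univ x), Finset.card_univ]
    omega
  intro k
  rw [← hndef]
  have e1 := zf_add_nf G k
  rw [← hndef] at e1
  have e2 := zf_add_nf (pathGraph n) k
  rw [Fintype.card_fin] at e2
  rcases Nat.eq_zero_or_pos k with rfl | hk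
  · -- k = 0 : the empty set is non-forcing in both graphs
    have hnfG : nfCount (pathGraph n) 0 ≤ nfCount G 0 := by
      rw [nfCount, nfCount]
      have hne : ¬ IsZeroForcing G (↑(∅ : Finset V)) := by
        intro hf
        obtain ⟨z⟩ : Nonempty V := Fintype.card_pos_iff.1 (by omega)
        have := hf z
        rw [Finset.coe_empty] at this
        exact zfClosure_empty G z this
      refine Nat.card_le_card_of_injective (fun _ => ⟨∅, Finset.card_empty, hne⟩) ?_
      intro a b _
      apply Subtype.ext
      rw [Finset.card_eq_zero.1 a.2.1, Finset.card_eq_zero.1 b.2.1]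
    omega
  · -- k ≥ 1
    have e3 := zf_add_nf (G.induce s₁) k
    rw [hc1] at e3
    have e4 := zf_add_nf (pathGraph (n - 1)) k
    rw [Fintype.card_fin] at e4
    have e5 := zf_add_nf (G.induce s₂) (k - 1)
    rw [hc2] at e5
    have e6 := zf_add_nf (pathGraph (n - 2)) (k - 1)
    rw [Fintype.card_fin] at e6
    have h1k : zfCount (G.induce s₁) k ≤ zfCount (pathGraph (n - 1)) k := by
      have := h1 k; rwa [hc1] at this
    have h2k : zfCount (G.induce s₂) (k - 1) ≤ zfCount (pathGraph (n - 2)) (k - 1) := by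
      have := h2 (k - 1); rwa [hc2] at this
    have hrec := path_rec (show 3 ≤ n by omega) k
    -- the key leaf recurrence for G
    have key : nfCount (G.induce s₁) k + nfCount (G.induce s₂) (k - 1) ≤ nfCount G k := by
      rw [nfCount, nfCount, nfCount, ← Nat.card_sum]
      let e₁ : s₁ ↪ V := Function.Embedding.subtype _
      let e₂ : s₂ ↪ V := Function.Embedding.subtype _
      have hx₁ : ∀ S : Finset s₁, x ∉ S.map e₁ := by
        intro S hxS
        obtain ⟨t, _, ht⟩ := Finset.mem_map.1 hxS
        exact (hs₁ x).1 (ht ▸ t.2) rfl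
      have hx₂ : ∀ T : Finset s₂, x ∉ T.map e₂ := by
        intro T hxT
        obtain ⟨t, _, ht⟩ := Finset.mem_map.1 hxT
        exact ((hs₂ x).1 (ht ▸ t.2)).1 rfl
      have hv₂ : ∀ T : Finset s₂, v ∉ T.map e₂ := by
        intro T hvT
        obtain ⟨t, _, ht⟩ := Finset.mem_map.1 hvT
        exact ((hs₂ v).1 (ht ▸ t.2)).2 rfl
      let gA : {S : Finset s₁ // S.card = k ∧ ¬IsZeroForcing (G.induce s₁) ↑S} →
          {S : Finset V // S.card = k ∧ ¬IsZeroForcing G ↑S} :=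
        fun a => ⟨a.1.map e₁, by rw [Finset.card_map]; exact a.2.1,
          nfA hadj huniq hs₁ a.1 a.2.2⟩
      let gB : {T : Finset s₂ // T.card = k - 1 ∧ ¬IsZeroForcing (G.induce s₂) ↑T} →
          {S : Finset V // S.card = k ∧ ¬IsZeroForcing G ↑S} :=
        fun b =>
          if hz : IsZeroForcing G ↑(insert x (b.1.map e₂)) then
            ⟨insert v (b.1.map e₂), by
              rw [Finset.card_insert_of_notMem (hv₂ b.1), Finset.card_map, b.2.1]; omega,
              nfB hadj huniq hs₂ b.1 b.2.2⟩
          else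
            ⟨insert x (b.1.map e₂), by
              rw [Finset.card_insert_of_notMem (hx₂ b.1), Finset.card_map, b.2.1]; omega, hz⟩
      have hmix : ∀ a b, gA a ≠ gB b := by
        intro a b hab
        simp only [gA, gB] at hab
        split_ifs at hab with hz
        · -- a.1.map e₁ = insert v (b.1.map e₂), contradict via simulation C
          have hab' : a.1.map e₁ = insert v (b.1.map e₂) := congrArg Subtype.val hab
          rw [Finset.coe_insert] at hz
          have hforce := zfC hadj huniq hs₁ (↑(b.1.map e₂)) (hx₂ b.1) hz
          apply a.2.2
          have hsets : (↑a.1 : Set s₁) = Subtype.val ⁻¹' (insert v ↑(b.1.map e₂)) := by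
            have himg : (Subtype.val '' (↑a.1 : Set s₁) : Set V) = insert v ↑(b.1.map e₂) := by
              rw [← Finset.coe_insert, ← hab', Finset.coe_map]
              rfl
            rw [← himg, Set.preimage_image_eq _ Subtype.val_injective]
          rw [hsets]
          exact hforce
        · have hab' : a.1.map e₁ = insert x (b.1.map e₂) := congrArg Subtype.val hab
          exact hx₁ a.1 (hab' ▸ Finset.mem_insert_self x _)
      have hinj : Function.Injective (Sum.elim gA gB) := by
        rintro (a | a) (b | b) hab
        · simp only [Sum.elim_inl] at hab
          have : a.1.map e₁ = b.1.map e₁ := congrArg Subtype.val hab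
          exact congrArg Sum.inl (Subtype.ext (Finset.map_injective e₁ this))
        · exact absurd (by simpa using hab) (hmix a b)
        · exact absurd (by simpa using hab.symm) (hmix b a)
        · simp only [Sum.elim_inr] at hab
          simp only [gB] at hab
          split_ifs at hab with hza hzb
          · have h' : insert v (a.1.map e₂) = insert v (b.1.map e₂) :=
              congrArg Subtype.val hab
            have := congrArg (fun s => Finset.erase s v) h'
            simp only [Finset.erase_insert (hv₂ a.1), Finset.erase_insert (hv₂ b.1)] at this
            exact congrArg Sum.inr (Subtype.ext (Finset.map_injective e₂ this))
          · exfalso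
            have h' : insert v (a.1.map e₂) = insert x (b.1.map e₂) :=
              congrArg Subtype.val hab
            have hxmem : x ∈ insert v (a.1.map e₂) := h' ▸ Finset.mem_insert_self x _
            rcases Finset.mem_insert.1 hxmem with h | h
            · exact hxv h
            · exact hx₂ a.1 h
          · exfalso
            have h' : insert x (a.1.map e₂) = insert v (b.1.map e₂) :=
              congrArg Subtype.val hab
            have hxmem : x ∈ insert v (b.1.map e₂) := h' ▸ Finset.mem_insert_self x _
            rcases Finset.mem_insert.1 hxmem with h | h
            · exact hxv h
            · exact hx₂ b.1 h
          · have h' : insert x (a.1.map e₂) = insert x (b.1.map e₂) :=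
              congrArg Subtype.val hab
            have := congrArg (fun s => Finset.erase s x) h'
            simp only [Finset.erase_insert (hx₂ a.1), Finset.erase_insert (hx₂ b.1)] at this
            exact congrArg Sum.inr (Subtype.ext (Finset.map_injective e₂ this))
      exact Nat.card_le_card_of_injective (Sum.elim gA gB) hinj
    omega
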